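/- The connecting operator satisfies (C^T f, g)_{L²(0,T)} = (u^f(T), u^g(T))_{ℂ^N} for all f, g ∈ L²(0,T), and C^T is a nonnegative self-adjoint operator whose range equals F_1^T = span{S_k(T-·)}_{k=1}^N. -/

import Mathlib

open MeasureTheory

/-- The wave kernel `S(t,λ)`: `sin(√λ t)/√λ` for `λ > 0`,
`sinh(√(-λ) t)/√(-λ)` for `λ < 0`, and `t` for `λ = 0`. -/
noncomputable def S (t lam : ℝ) : ℝ :=
  if 0 < lam then Real.sin (Real.sqrt lam * t) / Real.sqrt lam
  else if lam < 0 then Real.sinh (Real.sqrt (-lam) * t) / Real.sqrt (-lam)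
  else t

noncomputable def Cc (t lam : ℝ) : ℝ :=
  if 0 < lam then Real.cos (Real.sqrt lam * t)
  else if lam < 0 then Real.cosh (Real.sqrt (-lam) * t)
  else 1

lemma hasDerivAt_S (lam t : ℝ) : HasDerivAt (fun u => S u lam) (Cc t lam) t := by
  rcases lt_trichotomy lam 0 with h | h | h
  · have hb : Real.sqrt (-lam) ≠ 0 := Real.sqrt_ne_zero'.mpr (by linarith)
    have : HasDerivAt (fun u => Real.sinh (Real.sqrt (-lam) * u) / Real.sqrt (-lam))
        (Real.cosh (Real.sqrt (-lam) * t)) t := by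
      have h1 : HasDerivAt (fun u : ℝ => Real.sqrt (-lam) * u) (Real.sqrt (-lam)) t := by
        simpa using (hasDerivAt_id t).const_mul (Real.sqrt (-lam))
      have h2 := ((Real.hasDerivAt_sinh _).comp t h1).div_const (Real.sqrt (-lam))
      have : Real.cosh (Real.sqrt (-lam) * t) * Real.sqrt (-lam) / Real.sqrt (-lam)
          = Real.cosh (Real.sqrt (-lam) * t) := by field_simp
      rwa [this] at h2
    have e1 : (fun u => S u lam) = fun u => Real.sinh (Real.sqrt (-lam) * u) / Real.sqrt (-lam) := by
      funext u; simp [S, h, not_lt.mpr h.le, asymm h]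
    have e2 : Cc t lam = Real.cosh (Real.sqrt (-lam) * t) := by
      simp [Cc, h, asymm h]
    rw [e1, e2]; exact this
  · subst h
    have e1 : (fun u => S u (0:ℝ)) = fun u => u := by funext u; simp [S]
    have e2 : Cc t 0 = 1 := by simp [Cc]
    rw [e1, e2]; exact hasDerivAt_id t
  · have hb : Real.sqrt lam ≠ 0 := Real.sqrt_ne_zero'.mpr (by linarith)
    have h1 : HasDerivAt (fun u : ℝ => Real.sqrt lam * u) (Real.sqrt lam) t := by
      simpa using (hasDerivAt_id t).const_mul (Real.sqrt lam)
    have h2 := ((Real.hasDerivAt_sin _).comp t h1).div_const (Real.sqrt lam)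
    have e0 : Real.cos (Real.sqrt lam * t) * Real.sqrt lam / Real.sqrt lam
        = Real.cos (Real.sqrt lam * t) := by field_simp
    rw [e0] at h2
    have e1 : (fun u => S u lam) = fun u => Real.sin (Real.sqrt lam * u) / Real.sqrt lam := by
      funext u; simp [S, h]
    have e2 : Cc t lam = Real.cos (Real.sqrt lam * t) := by simp [Cc, h]
    rw [e1, e2]; exact h2

lemma hasDerivAt_Cc (lam t : ℝ) : HasDerivAt (fun u => Cc u lam) (-lam * S t lam) t := by
  rcases lt_trichotomy lam 0 with h | h | h
  · have hb : Real.sqrt (-lam) ≠ 0 := Real.sqrt_ne_zero'.mpr (by linarith)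
    have h1 : HasDerivAt (fun u : ℝ => Real.sqrt (-lam) * u) (Real.sqrt (-lam)) t := by
      simpa using (hasDerivAt_id t).const_mul (Real.sqrt (-lam))
    have h2 := (Real.hasDerivAt_cosh _).comp t h1
    have e1 : (fun u => Cc u lam) = fun u => Real.cosh (Real.sqrt (-lam) * u) := by
      funext u; simp [Cc, h, asymm h]
    have e2 : -lam * S t lam = Real.sinh (Real.sqrt (-lam) * t) * Real.sqrt (-lam) := by
      have hs : Real.sqrt (-lam) ^ 2 = -lam := Real.sq_sqrt (by linarith)
      simp only [S, h, not_lt.mpr h.le, asymm h, if_false, if_true]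
      generalize Real.sqrt (-lam) = s at hs hb ⊢
      rw [← hs]; field_simp
    rw [e1, e2]; exact h2
  · subst h
    have e1 : (fun u => Cc u (0:ℝ)) = fun _ => (1:ℝ) := by funext u; simp [Cc]
    rw [e1]
    simpa using (hasDerivAt_const t (1:ℝ))
  · have hb : Real.sqrt lam ≠ 0 := Real.sqrt_ne_zero'.mpr (by linarith)
    have h1 : HasDerivAt (fun u : ℝ => Real.sqrt lam * u) (Real.sqrt lam) t := by
      simpa using (hasDerivAt_id t).const_mul (Real.sqrt lam)
    have h2 := (Real.hasDerivAt_cos _).comp t h1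
    have e1 : (fun u => Cc u lam) = fun u => Real.cos (Real.sqrt lam * u) := by
      funext u; simp [Cc, h]
    have e2 : -lam * S t lam = -Real.sin (Real.sqrt lam * t) * Real.sqrt lam := by
      have hs : Real.sqrt lam ^ 2 = lam := Real.sq_sqrt h.le
      simp only [S, h, if_true]
      field_simp; linear_combination (Real.sin (Real.sqrt lam * t)) * hs
    rw [e1, e2]; exact h2

lemma continuous_S (lam : ℝ) : Continuous (fun t => S t lam) :=
  Differentiable.continuous (fun t => (hasDerivAt_S lam t).differentiableAt)

lemma S_Cc_sq (lam t : ℝ) : Cc t lam ^ 2 + lam * S t lam ^ 2 = 1 := by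
  rcases lt_trichotomy lam 0 with h | h | h
  · have hs : Real.sqrt (-lam) ^ 2 = -lam := Real.sq_sqrt (by linarith)
    have hb : Real.sqrt (-lam) ≠ 0 := Real.sqrt_ne_zero'.mpr (by linarith)
    simp only [S, Cc, h, not_lt.mpr h.le, asymm h, if_false, if_true]
    have := Real.cosh_sq_sub_sinh_sq (Real.sqrt (-lam) * t)
    field_simp
    nlinarith [this]
  · subst h; simp [S, Cc]
  · have hs : Real.sqrt lam ^ 2 = lam := Real.sq_sqrt h.le
    have hb : Real.sqrt lam ≠ 0 := Real.sqrt_ne_zero'.mpr (by linarith)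
    simp only [S, Cc, h, if_true]
    have := Real.sin_sq_add_cos_sq (Real.sqrt lam * t)
    field_simp
    try nlinarith [this]

open Topology in
lemma S_indep {N : ℕ} {T : ℝ} (hT : 0 < T) (lam : Fin N → ℝ)
    (hlam : Function.Injective lam) (c : Fin N → ℝ)
    (hc : ∀ t ∈ Set.Ioo (0:ℝ) T, ∑ k, c k * S t (lam k) = 0) : c = 0 := by
  have key : ∀ m : ℕ,
      iteratedDeriv (2*m) (fun t => ∑ k, c k * S t (lam k))
        = (fun t => ∑ k, c k * ((-lam k)^m * S t (lam k)))
      ∧ iteratedDeriv (2*m+1) (fun t => ∑ k, c k * S t (lam k))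
        = (fun t => ∑ k, c k * ((-lam k)^m * Cc t (lam k))) := by
    intro m
    induction m with
    | zero =>
      constructor
      · rw [show 2*0 = 0 from rfl, iteratedDeriv_zero]
        funext t; simp
      · rw [show 2*0+1 = 1 from rfl, iteratedDeriv_one]
        funext t
        have h : HasDerivAt (fun t => ∑ k, c k * S t (lam k))
            (∑ k, c k * Cc t (lam k)) t :=
          HasDerivAt.fun_sum fun k _ => (hasDerivAt_S (lam k) t).const_mul (c k)
        rw [h.deriv]
        simp
    | succ m ih =>
      obtain ⟨ih0, ih1⟩ := ih
      have h0 : iteratedDeriv (2*(m+1)) (fun t => ∑ k, c k * S t (lam k))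
          = (fun t => ∑ k, c k * ((-lam k)^(m+1) * S t (lam k))) := by
        rw [show 2*(m+1) = (2*m+1)+1 by ring, iteratedDeriv_succ, ih1]
        funext t
        have h : HasDerivAt (fun t => ∑ k, c k * ((-lam k)^m * Cc t (lam k)))
            (∑ k, c k * ((-lam k)^m * (-lam k * S t (lam k)))) t :=
          HasDerivAt.fun_sum fun k _ =>
            (((hasDerivAt_Cc (lam k) t).const_mul ((-lam k)^m)).const_mul (c k))
        rw [h.deriv]
        exact Finset.sum_congr rfl fun k _ => by ring
      refine ⟨h0, ?_⟩
      rw [iteratedDeriv_succ, h0]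
      funext t
      have h : HasDerivAt (fun t => ∑ k, c k * ((-lam k)^(m+1) * S t (lam k)))
          (∑ k, c k * ((-lam k)^(m+1) * Cc t (lam k))) t :=
        HasDerivAt.fun_sum fun k _ =>
          (((hasDerivAt_S (lam k) t).const_mul ((-lam k)^(m+1))).const_mul (c k))
      rw [h.deriv]
  have ht0 : T/2 ∈ Set.Ioo (0:ℝ) T := ⟨by linarith, by linarith⟩
  have hg : (fun t => ∑ k, c k * S t (lam k)) =ᶠ[𝓝 (T/2)] (fun _ => (0:ℝ)) :=
    Filter.eventually_of_mem (isOpen_Ioo.mem_nhds ht0) hc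
  have hzero : ∀ n, iteratedDeriv n (fun t => ∑ k, c k * S t (lam k)) (T/2) = 0 := by
    intro n
    rw [Filter.EventuallyEq.iteratedDeriv_eq n hg]
    have : iteratedDeriv n (fun _ : ℝ => (0:ℝ)) = fun _ => 0 := by
      induction n with
      | zero => rw [iteratedDeriv_zero]
      | succ n ihn => rw [iteratedDeriv_succ, ihn]; funext x; simp
    rw [this]
  have hneg : Function.Injective (fun k => -lam k) := fun a b h => hlam (neg_injective h)
  have hSzero : (fun k => c k * S (T/2) (lam k)) = 0 := by
    apply Matrix.eq_zero_of_forall_pow_sum_mul_pow_eq_zero hneg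
    intro i
    have := hzero (2*(i:ℕ))
    rw [(key (i:ℕ)).1] at this
    rw [← this]
    exact Finset.sum_congr rfl fun k _ => by ring
  have hCzero : (fun k => c k * Cc (T/2) (lam k)) = 0 := by
    apply Matrix.eq_zero_of_forall_pow_sum_mul_pow_eq_zero hneg
    intro i
    have := hzero (2*(i:ℕ)+1)
    rw [(key (i:ℕ)).2] at this
    rw [← this]
    exact Finset.sum_congr rfl fun k _ => by ring
  funext k
  by_contra hck
  have h1 : S (T/2) (lam k) = 0 := by
    have := congrFun hSzero k
    simp only [Pi.zero_apply, mul_eq_zero] at this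
    tauto
  have h2 : Cc (T/2) (lam k) = 0 := by
    have := congrFun hCzero k
    simp only [Pi.zero_apply, mul_eq_zero] at this
    tauto
  have := S_Cc_sq (lam k) (T/2)
  rw [h1, h2] at this
  norm_num at this

lemma gram_det_ne_zero {N : ℕ} {T : ℝ} (hT : 0 < T) (lam : Fin N → ℝ)
    (hlam : Function.Injective lam) :
    (Matrix.of fun k j : Fin N =>
      ∫ t in (0:ℝ)..T, S (T-t) (lam k) * S (T-t) (lam j)).det ≠ 0 := by
  intro hdet
  obtain ⟨b, hb0, hGb⟩ := (Matrix.exists_mulVec_eq_zero_iff).mpr hdet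
  set h : ℝ → ℝ := fun t => ∑ k, b k * S (T - t) (lam k) with hh
  have hvcont : ∀ k : Fin N, Continuous fun t => S (T - t) (lam k) :=
    fun k => (continuous_S (lam k)).comp (continuous_const.sub continuous_id)
  have hcont : Continuous h :=
    continuous_finset_sum _ fun k _ => continuous_const.mul (hvcont k)
  have hint : (∫ t in (0:ℝ)..T, (h t)^2) = 0 := by
    have e1 : (fun t => (h t)^2) = fun t => ∑ k, b k * (S (T-t) (lam k) * h t) := by
      funext t
      rw [hh]; simp only
      rw [sq, Finset.sum_mul]
      exact Finset.sum_congr rfl fun k _ => by ring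
    rw [e1, intervalIntegral.integral_finset_sum fun k _ =>
      ((continuous_const.fun_mul ((hvcont k).fun_mul hcont)).intervalIntegrable _ _)]
    refine Finset.sum_eq_zero fun k _ => ?_
    rw [intervalIntegral.integral_const_mul]
    have e2 : (fun t => S (T-t) (lam k) * h t)
        = fun t => ∑ j, b j * (S (T-t) (lam k) * S (T-t) (lam j)) := by
      funext t
      rw [hh]; simp only
      rw [Finset.mul_sum]
      exact Finset.sum_congr rfl fun j _ => by ring
    rw [e2, intervalIntegral.integral_finset_sum fun j _ =>
      ((continuous_const.fun_mul ((hvcont k).fun_mul (hvcont j))).intervalIntegrable _ _)]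
    have hGbk := congrFun hGb k
    rw [Matrix.mulVec, dotProduct] at hGbk
    have : (∑ j, ∫ t in (0:ℝ)..T, b j * (S (T-t) (lam k) * S (T-t) (lam j)))
        = ∑ j, (Matrix.of fun k j : Fin N =>
            ∫ t in (0:ℝ)..T, S (T-t) (lam k) * S (T-t) (lam j)) k j * b j := by
      refine Finset.sum_congr rfl fun j _ => ?_
      rw [intervalIntegral.integral_const_mul]
      simp [Matrix.of_apply, mul_comm]
    rw [this, hGbk]; simp
  have hae : ∀ᵐ t, t ∈ Set.Ioc (0:ℝ) T → (h t)^2 = 0 := by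
    rw [intervalIntegral.integral_of_le hT.le] at hint
    have hi : MeasureTheory.IntegrableOn (fun t => h t ^2) (Set.Ioc (0:ℝ) T) :=
      (hcont.pow 2).integrableOn_Ioc
    have h0 := (MeasureTheory.integral_eq_zero_iff_of_nonneg_ae
      (Filter.Eventually.of_forall fun t => sq_nonneg (h t)) hi).mp hint
    exact (MeasureTheory.ae_restrict_iff' measurableSet_Ioc).mp h0
  have heq : ∀ t ∈ Set.Ioo (0:ℝ) T, h t = 0 := by
    by_contra hne
    push_neg at hne
    obtain ⟨t0, ht0, hht0⟩ := hne
    have hUopen : IsOpen (Set.Ioo (0:ℝ) T ∩ {t | h t ≠ 0}) := by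
      refine isOpen_Ioo.inter ?_
      have : {t | h t ≠ 0} = h ⁻¹' ({0}ᶜ) := rfl
      rw [this]
      exact (isOpen_compl_singleton).preimage hcont
    have hpos : 0 < MeasureTheory.volume (Set.Ioo (0:ℝ) T ∩ {t | h t ≠ 0}) :=
      hUopen.measure_pos MeasureTheory.volume ⟨t0, ht0, hht0⟩
    have hsub : (Set.Ioo (0:ℝ) T ∩ {t | h t ≠ 0})
        ⊆ {t | ¬ (t ∈ Set.Ioc (0:ℝ) T → h t ^2 = 0)} := by
      rintro t ⟨h1, h2⟩
      simp only [Set.mem_setOf_eq, Classical.not_imp]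
      exact ⟨⟨h1.1, h1.2.le⟩, pow_ne_zero 2 h2⟩
    have hz : MeasureTheory.volume {t | ¬ (t ∈ Set.Ioc (0:ℝ) T → h t ^2 = 0)} = 0 :=
      MeasureTheory.ae_iff.mp hae
    have : MeasureTheory.volume (Set.Ioo (0:ℝ) T ∩ {t | h t ≠ 0}) ≤
        MeasureTheory.volume {t | ¬ (t ∈ Set.Ioc (0:ℝ) T → h t ^2 = 0)} :=
      measure_mono hsub
    rw [hz] at this
    exact absurd (le_antisymm this zero_le) (ne_of_gt hpos)
  have hb := S_indep hT lam hlam b ?_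
  · exact hb0 hb
  · intro s hs
    have := heq (T - s) ⟨by linarith [hs.2], by linarith [hs.1]⟩
    rw [hh] at this
    simpa [show T - (T - s) = s by ring] using this


/-- the connecting operator `C^T` (the integral operator with
kernel `∑ₖ Sₖ(T-t)Sₖ(T-s)/ρₖ`) satisfies
`⟨C^T f, g⟩_{L²(0,T)} = ⟨u^f(T), u^g(T)⟩_{ℂ^N}` for all controls `f, g`; it is
nonnegative and self-adjoint, and its range is `F₁^T = span{Sₖ(T-·)}`. -/
theorem connecting_operator_properties
    (N : ℕ) (hN : 0 < N) (T : ℝ) (hT : 0 < T)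
    (lam : Fin N → ℝ) (hlam : Function.Injective lam)
    (phiv : Fin N → Fin N → ℝ)
    (rho : Fin N → ℝ) (hrhopos : ∀ k, 0 < rho k)
    (horth : ∀ j k : Fin N,
      ∑ i : Fin N, phiv j i * phiv k i = if j = k then rho k else 0)
    (W : (ℝ → ℂ) → (Fin N → ℂ))
    (hW : ∀ f : ℝ → ℂ,
      W f = fun i => ∑ k : Fin N,
        (1 / (rho k : ℂ)) * (∫ τ in (0:ℝ)..T, (S (T - τ) (lam k) : ℂ) * f τ)
          * (phiv k i : ℂ))
    (Cop : (ℝ → ℂ) → (ℝ → ℂ))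
    (hC : ∀ (f : ℝ → ℂ) (t : ℝ),
      Cop f t = ∫ s in (0:ℝ)..T,
        (∑ k : Fin N,
          (1 / (rho k : ℂ)) * (S (T - t) (lam k) : ℂ) * (S (T - s) (lam k) : ℂ))
          * f s) :
    (∀ f g : ℝ → ℂ, Continuous f → Continuous g →
        (∫ t in (0:ℝ)..T, Cop f t * (starRingEnd ℂ) (g t))
          = ∑ i : Fin N, W f i * (starRingEnd ℂ) (W g i)) ∧
      (∀ f : ℝ → ℂ, Continuous f →
        ∃ r : ℝ, 0 ≤ r ∧
          (∫ t in (0:ℝ)..T, Cop f t * (starRingEnd ℂ) (f t)) = (r : ℂ)) ∧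
      (∀ f g : ℝ → ℂ, Continuous f → Continuous g →
        (∫ t in (0:ℝ)..T, Cop f t * (starRingEnd ℂ) (g t))
          = (starRingEnd ℂ) (∫ t in (0:ℝ)..T, Cop g t * (starRingEnd ℂ) (f t))) ∧
      (∀ f : ℝ → ℂ, Continuous f →
        Cop f ∈ Submodule.span ℂ
          (Set.range fun k : Fin N => fun t : ℝ => (S (T - t) (lam k) : ℂ))) ∧
      (∀ h ∈ Submodule.span ℂ
          (Set.range fun k : Fin N => fun t : ℝ => (S (T - t) (lam k) : ℂ)),
        ∃ f : ℝ → ℂ, Continuous f ∧ Cop f = h) := by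
  have hEcont : ∀ k : Fin N, Continuous fun t : ℝ => ((S (T - t) (lam k) : ℝ) : ℂ) :=
    fun k => Complex.continuous_ofReal.comp
      ((continuous_S (lam k)).comp (continuous_const.sub continuous_id))
  set aa : Fin N → (ℝ → ℂ) → ℂ :=
    fun k f => ∫ τ in (0:ℝ)..T, ((S (T - τ) (lam k) : ℝ) : ℂ) * f τ with haa
  -- Cop formula
  have hCop : ∀ f : ℝ → ℂ, Continuous f → ∀ t : ℝ,
      Cop f t = ∑ k, (1 / (rho k : ℂ)) * aa k f * ((S (T - t) (lam k) : ℝ) : ℂ) := by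
    intro f hf t
    rw [hC f t]
    have e : (fun s => (∑ k, (1/(rho k:ℂ)) * (S (T-t) (lam k):ℂ) * (S (T-s) (lam k):ℂ)) * f s)
        = fun s => ∑ k, ((1/(rho k:ℂ)) * ((S (T-t) (lam k):ℝ):ℂ))
            * (((S (T-s) (lam k):ℝ):ℂ) * f s) := by
      funext s
      rw [Finset.sum_mul]
      exact Finset.sum_congr rfl fun k _ => by ring
    rw [e, intervalIntegral.integral_finset_sum fun k _ =>
      ((continuous_const.fun_mul ((hEcont k).fun_mul hf)).intervalIntegrable _ _)]
    refine Finset.sum_congr rfl fun k _ => ?_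
    rw [intervalIntegral.integral_const_mul]
    ring
  have hconj : ∀ (F : ℝ → ℂ), (∫ t in (0:ℝ)..T, (starRingEnd ℂ) (F t))
      = (starRingEnd ℂ) (∫ t in (0:ℝ)..T, F t) := by
    intro F
    rw [intervalIntegral.integral_of_le hT.le, intervalIntegral.integral_of_le hT.le,
      integral_conj]
  have hIP : ∀ f g : ℝ → ℂ, Continuous f → Continuous g →
      (∫ t in (0:ℝ)..T, Cop f t * (starRingEnd ℂ) (g t))
        = ∑ k, (1/(rho k:ℂ)) * aa k f * (starRingEnd ℂ) (aa k g) := by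
    intro f g hf hg
    have hgc : Continuous fun t => (starRingEnd ℂ) (g t) := Complex.continuous_conj.comp hg
    have e : (fun t => Cop f t * (starRingEnd ℂ) (g t))
        = fun t => ∑ k, ((1/(rho k:ℂ)) * aa k f)
            * (((S (T-t) (lam k):ℝ):ℂ) * (starRingEnd ℂ) (g t)) := by
      funext t
      rw [hCop f hf t, Finset.sum_mul]
      exact Finset.sum_congr rfl fun k _ => by ring
    rw [e, intervalIntegral.integral_finset_sum fun k _ =>
      ((continuous_const.fun_mul ((hEcont k).fun_mul hgc)).intervalIntegrable _ _)]
    refine Finset.sum_congr rfl fun k _ => ?_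
    rw [intervalIntegral.integral_const_mul]
    have e2 : (fun t => ((S (T-t) (lam k):ℝ):ℂ) * (starRingEnd ℂ) (g t))
        = fun t => (starRingEnd ℂ) (((S (T-t) (lam k):ℝ):ℂ) * g t) := by
      funext t
      rw [map_mul, Complex.conj_ofReal]
    rw [e2, hconj]
  have hρc : ∀ k : Fin N, (rho k : ℂ) ≠ 0 := fun k => by
    exact_mod_cast (hrhopos k).ne'
  have horthC : ∀ j k : Fin N, ∑ i, ((phiv j i:ℝ):ℂ) * ((phiv k i:ℝ):ℂ)
      = if j = k then ((rho k:ℝ):ℂ) else 0 := by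
    intro j k
    have := congrArg (fun r : ℝ => (r : ℂ)) (horth j k)
    push_cast at this
    convert this using 2
    split <;> simp
  have hRHS : ∀ f g : ℝ → ℂ,
      (∑ i, W f i * (starRingEnd ℂ) (W g i))
        = ∑ k, (1/(rho k:ℂ)) * aa k f * (starRingEnd ℂ) (aa k g) := by
    intro f g
    rw [hW f, hW g]
    simp only
    have e1 : ∀ i : Fin N,
        (∑ k, (1/(rho k:ℂ)) * aa k f * ((phiv k i:ℝ):ℂ))
          * (starRingEnd ℂ) (∑ j, (1/(rho j:ℂ)) * aa j g * ((phiv j i:ℝ):ℂ))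
        = ∑ k, ∑ j, ((1/(rho k:ℂ)) * aa k f * ((1/(rho j:ℂ))
            * (starRingEnd ℂ) (aa j g))) * (((phiv k i:ℝ):ℂ) * ((phiv j i:ℝ):ℂ)) := by
      intro i
      rw [map_sum, Finset.sum_mul_sum]
      refine Finset.sum_congr rfl fun k _ => Finset.sum_congr rfl fun j _ => ?_
      rw [map_mul, map_mul, Complex.conj_ofReal]
      rw [show (starRingEnd ℂ) (1/(rho j:ℂ)) = 1/(rho j:ℂ) by
        rw [map_div₀, map_one, Complex.conj_ofReal]]
      ring
    calc (∑ i, (∑ k, (1/(rho k:ℂ)) * aa k f * ((phiv k i:ℝ):ℂ))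
          * (starRingEnd ℂ) (∑ j, (1/(rho j:ℂ)) * aa j g * ((phiv j i:ℝ):ℂ)))
        = ∑ i, ∑ k, ∑ j, ((1/(rho k:ℂ)) * aa k f * ((1/(rho j:ℂ))
            * (starRingEnd ℂ) (aa j g))) * (((phiv k i:ℝ):ℂ) * ((phiv j i:ℝ):ℂ)) :=
          Finset.sum_congr rfl fun i _ => e1 i
      _ = ∑ k, ∑ j, ∑ i, ((1/(rho k:ℂ)) * aa k f * ((1/(rho j:ℂ))
            * (starRingEnd ℂ) (aa j g))) * (((phiv k i:ℝ):ℂ) * ((phiv j i:ℝ):ℂ)) := by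
          rw [Finset.sum_comm]
          exact Finset.sum_congr rfl fun k _ => by rw [Finset.sum_comm]
      _ = ∑ k, ∑ j, ((1/(rho k:ℂ)) * aa k f * ((1/(rho j:ℂ))
            * (starRingEnd ℂ) (aa j g))) * (if k = j then ((rho j:ℝ):ℂ) else 0) := by
          refine Finset.sum_congr rfl fun k _ => Finset.sum_congr rfl fun j _ => ?_
          rw [← Finset.mul_sum, horthC k j]
      _ = ∑ k, (1/(rho k:ℂ)) * aa k f * (starRingEnd ℂ) (aa k g) := by
          refine Finset.sum_congr rfl fun k _ => ?_
          simp only [mul_ite, mul_zero]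
          rw [Finset.sum_ite_eq]
          simp only [Finset.mem_univ, if_true]
          field_simp
          try rw [mul_div_mul_right _ _ (hρc k)]
  refine ⟨?_, ?_, ?_, ?_, ?_⟩
  · intro f g hf hg
    rw [hIP f g hf hg, hRHS f g]
  · intro f hf
    refine ⟨∑ k, (1 / rho k) * Complex.normSq (aa k f), ?_, ?_⟩
    · exact Finset.sum_nonneg fun k _ =>
        mul_nonneg (div_nonneg zero_le_one (hrhopos k).le) (Complex.normSq_nonneg _)
    · rw [hIP f f hf hf]
      push_cast
      refine Finset.sum_congr rfl fun k _ => ?_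
      rw [mul_assoc, Complex.mul_conj]
  · intro f g hf hg
    rw [hIP f g hf hg, hIP g f hg hf, map_sum]
    refine Finset.sum_congr rfl fun k _ => ?_
    rw [map_mul, map_mul, Complex.conj_conj]
    rw [show (starRingEnd ℂ) (1/(rho k:ℂ)) = 1/(rho k:ℂ) by
      rw [map_div₀, map_one, Complex.conj_ofReal]]
    ring
  · intro f hf
    rw [Submodule.mem_span_range_iff_exists_fun]
    refine ⟨fun k => (1/(rho k:ℂ)) * aa k f, ?_⟩
    funext t
    rw [Finset.sum_apply]
    rw [hCop f hf t]
    rfl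
  · intro h hmem
    obtain ⟨c, hc⟩ := (Submodule.mem_span_range_iff_exists_fun ℂ).mp hmem
    have hdet : (Matrix.of fun k j : Fin N =>
        ∫ t in (0:ℝ)..T, S (T-t) (lam k) * S (T-t) (lam j)).det ≠ 0 :=
      gram_det_ne_zero hT lam hlam
    set G : Matrix (Fin N) (Fin N) ℝ := Matrix.of fun k j : Fin N =>
        ∫ t in (0:ℝ)..T, S (T-t) (lam k) * S (T-t) (lam j) with hG
    set Gc : Matrix (Fin N) (Fin N) ℂ := G.map Complex.ofRealHom with hGc
    have hdetc : Gc.det ≠ 0 := by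
      have e : Gc = Complex.ofRealHom.mapMatrix G := rfl
      rw [e, ← RingHom.map_det]
      simpa using hdet
    have hu : IsUnit Gc.det := isUnit_iff_ne_zero.mpr hdetc
    set y : Fin N → ℂ := fun k => (rho k : ℂ) * c k with hy
    set b : Fin N → ℂ := Gc⁻¹.mulVec y with hb
    have hGb : Gc.mulVec b = y := by
      rw [hb, Matrix.mulVec_mulVec, Matrix.mul_nonsing_inv _ hu, Matrix.one_mulVec]
    set f : ℝ → ℂ := fun t => ∑ j, b j * ((S (T-t) (lam j):ℝ):ℂ) with hf
    have hfc : Continuous f :=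
      continuous_finset_sum _ fun j _ => continuous_const.mul (hEcont j)
    have haaf : ∀ k, aa k f = (rho k : ℂ) * c k := by
      intro k
      have e : (fun τ => ((S (T-τ) (lam k):ℝ):ℂ) * f τ)
          = fun τ => ∑ j, b j * (((S (T-τ) (lam k):ℝ):ℂ) * ((S (T-τ) (lam j):ℝ):ℂ)) := by
        funext τ
        rw [hf]; simp only
        rw [Finset.mul_sum]
        exact Finset.sum_congr rfl fun j _ => by ring
      have : aa k f = ∑ j, b j * ((G k j : ℝ):ℂ) := by
        rw [haa]; simp only
        rw [e, intervalIntegral.integral_finset_sum fun j _ =>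
          ((continuous_const.fun_mul ((hEcont k).fun_mul (hEcont j))).intervalIntegrable _ _)]
        refine Finset.sum_congr rfl fun j _ => ?_
        rw [intervalIntegral.integral_const_mul]
        congr 1
        have e2 : (fun τ => ((S (T-τ) (lam k):ℝ):ℂ) * ((S (T-τ) (lam j):ℝ):ℂ))
            = fun τ => ((S (T-τ) (lam k) * S (T-τ) (lam j) : ℝ) : ℂ) := by
          funext τ; push_cast; ring
        rw [e2, intervalIntegral.integral_ofReal]
        rfl
      rw [this]
      have : ∑ j, b j * ((G k j : ℝ):ℂ) = Gc.mulVec b k := by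
        rw [Matrix.mulVec, dotProduct]
        refine Finset.sum_congr rfl fun j _ => ?_
        rw [hGc]
        simp [Matrix.map_apply, mul_comm]
      rw [this, hGb, hy]
    refine ⟨f, hfc, ?_⟩
    funext t
    rw [hCop f hfc t]
    have hht : h t = ∑ k, c k * ((S (T-t) (lam k):ℝ):ℂ) := by
      rw [← hc, Finset.sum_apply]
      rfl
    rw [hht]
    refine Finset.sum_congr rfl fun k _ => ?_
    rw [haaf k]
    have hr := hρc k
    field_simp
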